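/- Let Φ : (A[[λ]], π) → (B[[λ]], σ) be a Poisson morphism deforming a Poisson morphism φ₀ : (A,π₀) → (B,σ₀) with φ₀ injective, and let A' be the Poisson commutant of φ₀(A) in (B, σ₀), with inclusion φ₀'. Let C = {b ∈ B[[λ]] : σ(b, Φ(a)) = 0 for all a ∈ A[[λ]]} be the Poisson commutant of Φ(A[[λ]]). If X' ∈ λ·Der(B)[[λ]] satisfies exp(X')φ₀'(A'[[λ]]) ⊆ C, then exp(X')∘φ₀' : A'[[λ]] → C is a ring isomorphism. -/

import Mathlib

/-- A Poisson bracket on a commutative ring: an antisymmetric biderivation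
satisfying the Jacobi identity. -/
structure IsPoissonBr {R : Type*} [CommRing R] (br : R → R → R) : Prop where
  add_left : ∀ x y z, br (x + y) z = br x z + br y z
  add_right : ∀ x y z, br x (y + z) = br x y + br x z
  antisymm : ∀ x y, br x y = - br y x
  leibniz : ∀ x y z, br x (y * z) = br x y * z + y * br x z
  jacobi : ∀ x y z, br x (br y z) = br (br x y) z + br y (br x z)

/-- `D` represents an element `X ∈ λ·Der(B)[[λ]]`, i.e. a formal derivation of `B[[λ]]`
(additive, `K`-linear, Leibniz, `λ`-linear) whose zeroth order term vanishes. -/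
def IsFormalDer (K : Type*) {B : Type*} [Field K] [CommRing B] [Algebra K B]
    (D : PowerSeries B → PowerSeries B) : Prop :=
  (∀ f g, D (f + g) = D f + D g) ∧
  (∀ (c : K) (f : PowerSeries B), D (c • f) = c • D f) ∧
  (∀ f g, D (f * g) = D f * g + f * D g) ∧
  (∀ f, D (PowerSeries.X * f) = PowerSeries.X * D f) ∧
  (∀ f, PowerSeries.coeff (R := B) 0 (D f) = 0)

/-- The exponential `exp(D) = id + D + D²/2! + ⋯`, well defined in each `λ`-order. -/
noncomputable def expF (K : Type*) {B : Type*} [Field K] [CommRing B] [Algebra K B]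
    (D : PowerSeries B → PowerSeries B) : PowerSeries B → PowerSeries B :=
  fun f => PowerSeries.mk fun n =>
    ∑ m ∈ Finset.range (n + 1), ((m.factorial : K)⁻¹) • PowerSeries.coeff (R := B) n (D^[m] f)
section ExpL
open PowerSeries Finset
variable {K B : Type*} [Field K] [CommRing B] [Algebra K B]
  {D : PowerSeries B → PowerSeries B}

namespace FD

def hom (hD : IsFormalDer K D) : PowerSeries B →+ PowerSeries B :=
  AddMonoidHom.mk' D hD.1

lemma hom_apply (hD : IsFormalDer K D) (f) : hom hD f = D f := rfl

lemma zero (hD : IsFormalDer K D) : D 0 = 0 := (hom hD).map_zero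

lemma iter_add (hD : IsFormalDer K D) (m : ℕ) (f g) :
    D^[m] (f + g) = D^[m] f + D^[m] g := by
  induction m generalizing f g with
  | zero => rfl
  | succ m IH =>
    simp only [Function.iterate_succ_apply, hD.1, IH]

lemma iter_neg (hD : IsFormalDer K D) (m : ℕ) (f) :
    D^[m] (-f) = -(D^[m] f) := by
  induction m generalizing f with
  | zero => rfl
  | succ m IH =>
    simp only [Function.iterate_succ_apply, show D (-f) = -(D f) from (hom hD).map_neg f, IH]

lemma iter_X_mul (hD : IsFormalDer K D) (m : ℕ) (f) :
    D^[m] (X * f) = X * D^[m] f := by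
  induction m generalizing f with
  | zero => rfl
  | succ m IH =>
    simp only [Function.iterate_succ_apply, hD.2.2.2.1, IH]

lemma dvd_succ (hD : IsFormalDer K D) (k : ℕ) {f} (h : (X : PowerSeries B) ^ k ∣ f) :
    (X : PowerSeries B) ^ (k + 1) ∣ D f := by
  obtain ⟨u, rfl⟩ := h
  induction k generalizing u with
  | zero =>
    rw [pow_zero, one_mul, zero_add, pow_one, X_dvd_iff]
    simpa [PowerSeries.coeff_zero_eq_constantCoeff] using hD.2.2.2.2 u
  | succ k IH =>
    have : (X : PowerSeries B) ^ (k + 1) * u = X * (X ^ k * u) := by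
      rw [pow_succ']; ring
    rw [this, hD.2.2.2.1]
    have := IH u
    calc (X : PowerSeries B) ^ (k + 1 + 1) = X * X ^ (k + 1) := by rw [pow_succ']
    _ ∣ X * D (X ^ k * u) := mul_dvd_mul_left _ this
    _ = _ := rfl

lemma iter_dvd (hD : IsFormalDer K D) (m k : ℕ) {f} (h : (X : PowerSeries B) ^ k ∣ f) :
    (X : PowerSeries B) ^ (k + m) ∣ D^[m] f := by
  induction m generalizing f k with
  | zero => simpa using h
  | succ m IH =>
    rw [Function.iterate_succ_apply]
    have := IH (k + 1) (dvd_succ hD k h)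
    rw [show k + (m+1) = k + 1 + m by omega]
    exact this

lemma coeff_iter_zero (hD : IsFormalDer K D) {n m : ℕ} (h : n < m) (f) :
    coeff (R := B) n (D^[m] f) = 0 := by
  have : (X : PowerSeries B) ^ m ∣ D^[m] f := by
    simpa using iter_dvd hD m 0 (by simp)
  exact X_pow_dvd_iff.mp this n h

end FD

lemma coeff_expF (f : PowerSeries B) (n : ℕ) :
    coeff (R := B) n (expF K D f)
      = ∑ m ∈ range (n + 1), ((m.factorial : K)⁻¹) • coeff (R := B) n (D^[m] f) :=
  coeff_mk _ _

lemma coeff_expF_ext (hD : IsFormalDer K D) (f : PowerSeries B) {n N : ℕ} (h : n ≤ N) :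
    coeff (R := B) n (expF K D f)
      = ∑ m ∈ range (N + 1), ((m.factorial : K)⁻¹) • coeff (R := B) n (D^[m] f) := by
  rw [coeff_expF]
  refine Finset.sum_subset (by intro x hx; simp at *; omega) ?_
  intro m hm hnm
  simp only [mem_range] at hm hnm
  rw [FD.coeff_iter_zero hD (by omega), smul_zero]

lemma expF_add (hD : IsFormalDer K D) (f g : PowerSeries B) :
    expF K D (f + g) = expF K D f + expF K D g := by
  ext n
  simp only [map_add, coeff_expF, FD.iter_add hD, smul_add, Finset.sum_add_distrib]

lemma expF_neg (hD : IsFormalDer K D) (f : PowerSeries B) :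
    expF K D (-f) = -(expF K D f) := by
  ext n
  simp only [map_neg, coeff_expF, FD.iter_neg hD, smul_neg, Finset.sum_neg_distrib]

lemma expF_sub (hD : IsFormalDer K D) (f g : PowerSeries B) :
    expF K D (f - g) = expF K D f - expF K D g := by
  rw [sub_eq_add_neg, expF_add hD, expF_neg hD, sub_eq_add_neg]

lemma expF_zero (hD : IsFormalDer K D) : expF K D 0 = 0 := by
  have := expF_add hD 0 0
  rw [add_zero] at this
  exact (left_eq_add.mp this)

lemma expF_X_mul (hD : IsFormalDer K D) (f : PowerSeries B) :
    expF K D (X * f) = X * expF K D f := by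
  ext n
  cases n with
  | zero =>
    rw [coeff_expF]
    have h0 : coeff (R := B) 0 (X * expF K D f) = 0 := by
      have : (X : PowerSeries B) ∣ X * expF K D f := ⟨_, rfl⟩
      simpa [coeff_zero_eq_constantCoeff] using X_dvd_iff.mp this
    rw [h0]
    refine Finset.sum_eq_zero fun m _ => ?_
    rw [FD.iter_X_mul hD]
    have : (X : PowerSeries B) ∣ X * D^[m] f := ⟨_, rfl⟩
    rw [show coeff (R := B) 0 (X * D^[m] f) = 0 by
      simpa [coeff_zero_eq_constantCoeff] using X_dvd_iff.mp this, smul_zero]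
  | succ n =>
    rw [coeff_succ_X_mul, coeff_expF, coeff_expF, Finset.sum_range_succ]
    simp only [FD.iter_X_mul hD, coeff_succ_X_mul]
    rw [FD.coeff_iter_zero hD (Nat.lt_succ_self n), smul_zero, add_zero]

lemma coeff_zero_expF (hD : IsFormalDer K D) (f : PowerSeries B) :
    coeff (R := B) 0 (expF K D f) = coeff (R := B) 0 f := by
  rw [coeff_expF, Finset.sum_range_one]
  simp

lemma expF_coeff_rev (hD : IsFormalDer K D) {f : PowerSeries B} {n : ℕ}
    (h : ∀ j < n, coeff (R := B) j (expF K D f) = 0) : ∀ j < n, coeff (R := B) j f = 0 := by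
  intro j
  induction j using Nat.strong_induction_on with
  | _ j IH =>
    intro hj
    have hdvd : (X : PowerSeries B) ^ j ∣ f :=
      X_pow_dvd_iff.mpr fun m hm => IH m hm (lt_trans hm hj)
    have key : coeff (R := B) j (expF K D f) = coeff (R := B) j f := by
      rw [coeff_expF, Finset.sum_eq_single 0]
      · simp
      · intro m hm hm0
        have : (X : PowerSeries B) ^ (j + m) ∣ D^[m] f := FD.iter_dvd hD m j hdvd
        rw [X_pow_dvd_iff.mp this j (by omega), smul_zero]
      · intro hm; simp at hm
    rw [← key]
    exact h j hj

lemma expF_injective (hD : IsFormalDer K D) : Function.Injective (expF K D) := by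
  intro f g hfg
  have h0 : expF K D (f - g) = 0 := by rw [expF_sub hD, hfg, sub_self]
  have : f - g = 0 := by
    ext j
    refine expF_coeff_rev hD (n := j + 1) (fun i _ => by rw [h0, map_zero]) j (Nat.lt_succ_self j)
  exact sub_eq_zero.mp this


lemma expF_one (hD : IsFormalDer K D) : expF K D 1 = 1 := by
  have hD1 : D 1 = 0 := by
    have h := hD.2.2.1 1 1
    rw [mul_one, mul_one, one_mul] at h
    exact (left_eq_add.mp h)
  have hiter : ∀ m : ℕ, 0 < m → D^[m] (1 : PowerSeries B) = 0 := by
    intro m hm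
    obtain ⟨m, rfl⟩ := Nat.exists_eq_succ_of_ne_zero hm.ne'
    rw [Function.iterate_succ_apply, hD1]
    clear hm
    induction m with
    | zero => rfl
    | succ m IH => rw [Function.iterate_succ_apply, FD.zero hD, IH]
  ext n
  rw [coeff_expF, Finset.sum_eq_single 0]
  · simp
  · intro m hm hm0
    rw [hiter m (Nat.pos_of_ne_zero hm0), map_zero, smul_zero]
  · intro hm; simp at hm

lemma D_sum (hD : IsFormalDer K D) {ι : Type*} (s : Finset ι) (f : ι → PowerSeries B) :
    D (∑ i ∈ s, f i) = ∑ i ∈ s, D (f i) :=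
  map_sum (FD.hom hD) f s

lemma D_nsmul (hD : IsFormalDer K D) (n : ℕ) (f : PowerSeries B) :
    D (n • f) = n • D f :=
  map_nsmul (FD.hom hD) n f

lemma iter_leibniz (hD : IsFormalDer K D) (m : ℕ) (f g : PowerSeries B) :
    D^[m] (f * g)
      = ∑ k ∈ Finset.range (m + 1), m.choose k • (D^[m - k] f * D^[k] g) := by
  induction m with
  | zero => simp [Finset.range]
  | succ m IH =>
    calc
      D^[m + 1] (f * g) =
          D (∑ k ∈ Finset.range (m + 1), m.choose k • (D^[m - k] f * D^[k] g)) := by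
        rw [Function.iterate_succ_apply', IH]
      _ = (∑ k ∈ Finset.range (m + 1),
            m.choose k • (D^[m - k + 1] f * D^[k] g)) +
          ∑ k ∈ Finset.range (m + 1),
            m.choose k • (D^[m - k] f * D^[k + 1] g) := by
        rw [D_sum hD]
        simp_rw [D_nsmul hD, hD.2.2.1, Function.iterate_succ_apply',
          smul_add, Finset.sum_add_distrib]
      _ = ((∑ k ∈ Finset.range (m + 1),
            m.choose k.succ • (D^[m - k] f * D^[k + 1] g)) +
          1 • (D^[m + 1] f * D^[0] g)) +
          ∑ k ∈ Finset.range (m + 1), m.choose k • (D^[m - k] f * D^[k + 1] g) := ?_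
      _ = ((∑ k ∈ Finset.range (m + 1), m.choose k • (D^[m - k] f * D^[k + 1] g)) +
              ∑ k ∈ Finset.range (m + 1),
                m.choose k.succ • (D^[m - k] f * D^[k + 1] g)) +
            1 • (D^[m + 1] f * D^[0] g) := by
        abel
      _ = (∑ i ∈ Finset.range (m + 1),
              (m + 1).choose (i + 1) • (D^[m + 1 - (i + 1)] f * D^[i + 1] g)) +
            1 • (D^[m + 1] f * D^[0] g) := by
        simp_rw [Nat.choose_succ_succ, Nat.succ_sub_succ, add_smul, Finset.sum_add_distrib]
      _ = ∑ k ∈ Finset.range (m + 1 + 1),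
            (m + 1).choose k • (D^[m + 1 - k] f * D^[k] g) := by
        rw [Finset.sum_range_succ' _ (m + 1), Nat.choose_zero_right, tsub_zero]
    congr
    refine (Finset.sum_range_succ' _ _).trans (congr_arg₂ (· + ·) ?_ ?_)
    · rw [Finset.sum_range_succ, Nat.choose_succ_self, zero_smul, add_zero]
      refine Finset.sum_congr rfl fun k hk => ?_
      rw [Finset.mem_range] at hk
      congr
      omega
    · rw [Nat.choose_zero_right, tsub_zero]


lemma fact_inv_choose (K : Type*) [Field K] [CharZero K] {m j : ℕ} (h : j ≤ m) :
    ((m.factorial : K))⁻¹ * (m.choose j : K)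
      = (((m - j).factorial : K))⁻¹ * ((j.factorial : K))⁻¹ := by
  have key : ((m.choose j : K)) * (j.factorial : K) * ((m - j).factorial : K)
      = (m.factorial : K) := by
    exact_mod_cast congrArg (Nat.cast : ℕ → K) (Nat.choose_mul_factorial_mul_factorial h)
  have h1 : ((m.factorial : K)) ≠ 0 := Nat.cast_ne_zero.mpr m.factorial_ne_zero
  have h2 : ((j.factorial : K)) ≠ 0 := Nat.cast_ne_zero.mpr j.factorial_ne_zero
  have h3 : (((m - j).factorial : K)) ≠ 0 := Nat.cast_ne_zero.mpr (m - j).factorial_ne_zero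
  field_simp
  linear_combination key

lemma expF_mul [CharZero K] (hD : IsFormalDer K D) (f g : PowerSeries B) :
    expF K D (f * g) = expF K D f * expF K D g := by
  ext k
  set F : ℕ → ℕ → B := fun j i =>
    (((j.factorial : K))⁻¹ * ((i.factorial : K))⁻¹) • (coeff (R := B) k (D^[j] f * D^[i] g)) with hF
  have hFzero : ∀ j i, k < j + i → F j i = 0 := by
    intro j i hji
    have hdf : (X : PowerSeries B) ^ j ∣ D^[j] f := by
      simpa using FD.iter_dvd hD j 0 (by simp)
    have hdg : (X : PowerSeries B) ^ i ∣ D^[i] g := by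
      simpa using FD.iter_dvd hD i 0 (by simp)
    have hdd : (X : PowerSeries B) ^ (j + i) ∣ D^[j] f * D^[i] g := by
      rw [pow_add]; exact mul_dvd_mul hdf hdg
    simp only [hF]
    rw [X_pow_dvd_iff.mp hdd k hji, smul_zero]
  have hL : coeff (R := B) k (expF K D (f * g))
      = ∑ p ∈ Finset.range (k + 1) ×ˢ Finset.range (k + 1), F p.1 p.2 := by
    rw [coeff_expF]
    have e1 : ∀ m ∈ Finset.range (k + 1),
        ((m.factorial : K))⁻¹ • coeff (R := B) k (D^[m] (f * g))
          = ∑ j ∈ Finset.range (m + 1), F (m - j) j := by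
      intro m hm
      rw [iter_leibniz hD, map_sum, Finset.smul_sum]
      refine Finset.sum_congr rfl fun j hj => ?_
      rw [Finset.mem_range] at hj
      rw [map_nsmul, ← Nat.cast_smul_eq_nsmul K, smul_smul, fact_inv_choose K (by omega)]
    rw [Finset.sum_congr rfl e1, Finset.sum_sigma']
    rw [Finset.sum_nbij' (i := fun x : Σ _ : ℕ, ℕ => ((x.1 - x.2, x.2) : ℕ × ℕ))
      (j := fun p : ℕ × ℕ => (⟨p.1 + p.2, p.2⟩ : Σ _ : ℕ, ℕ))
      (t := (Finset.range (k + 1) ×ˢ Finset.range (k + 1)).filter fun p => p.1 + p.2 ≤ k)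
      (hi := ?_) (hj := ?_) (left_neg := ?_) (right_neg := ?_) (h := ?_)]
    · exact (Finset.sum_subset (Finset.filter_subset _ _) (by
        intro p hp hnp
        exact hFzero p.1 p.2 (not_le.mp fun hle => hnp (Finset.mem_filter.mpr ⟨hp, hle⟩))))
    · rintro ⟨m, j⟩ hx
      simp only [Finset.mem_sigma, Finset.mem_range] at hx
      simp only [Finset.mem_filter, Finset.mem_product, Finset.mem_range]
      omega
    · rintro ⟨a, b⟩ hp
      simp only [Finset.mem_filter, Finset.mem_product, Finset.mem_range] at hp
      simp only [Finset.mem_sigma, Finset.mem_range]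
      omega
    · rintro ⟨m, j⟩ hx
      simp only [Finset.mem_sigma, Finset.mem_range] at hx
      simp only [Sigma.mk.inj_iff]
      constructor
      · omega
      · exact HEq.rfl
    · rintro ⟨a, b⟩ hp
      simp only [Finset.mem_filter, Finset.mem_product, Finset.mem_range] at hp
      simp only [Prod.mk.injEq]
      exact ⟨by omega, trivial⟩
    · rintro ⟨m, j⟩ hx
      rfl
  have hR : coeff (R := B) k (expF K D f * expF K D g)
      = ∑ p ∈ Finset.range (k + 1) ×ˢ Finset.range (k + 1), F p.1 p.2 := by
    rw [coeff_mul]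
    have e2 : ∀ p ∈ Finset.HasAntidiagonal.antidiagonal k,
        coeff (R := B) p.1 (expF K D f) * coeff (R := B) p.2 (expF K D g)
          = ∑ j ∈ Finset.range (k + 1), ∑ i ∈ Finset.range (k + 1),
              (((j.factorial : K))⁻¹ * ((i.factorial : K))⁻¹)
                • (coeff (R := B) p.1 (D^[j] f) * coeff (R := B) p.2 (D^[i] g)) := by
      intro p hp
      have h1 : p.1 ≤ k := Finset.HasAntidiagonal.antidiagonal.fst_le hp
      have h2 : p.2 ≤ k := Finset.HasAntidiagonal.antidiagonal.snd_le hp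
      rw [coeff_expF_ext hD f h1, coeff_expF_ext hD g h2, Finset.sum_mul_sum]
      exact Finset.sum_congr rfl fun j _ => Finset.sum_congr rfl fun i _ =>
        (smul_mul_smul_comm _ _ _ _)
    rw [Finset.sum_congr rfl e2, Finset.sum_comm, Finset.sum_product']
    refine Finset.sum_congr rfl fun j _ => ?_
    rw [Finset.sum_comm]
    refine Finset.sum_congr rfl fun i _ => ?_
    simp only [hF]
    rw [coeff_mul, Finset.smul_sum]
  rw [hL, hR]


lemma expF_X_pow_mul (hD : IsFormalDer K D) (n : ℕ) (f : PowerSeries B) :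
    expF K D (X ^ n * f) = X ^ n * expF K D f := by
  induction n generalizing f with
  | zero => simp
  | succ n IH =>
    rw [pow_succ', mul_assoc, expF_X_mul hD, IH]
    ring

lemma expF_dvd (hD : IsFormalDer K D) {n : ℕ} {f : PowerSeries B}
    (h : (X : PowerSeries B) ^ n ∣ f) : (X : PowerSeries B) ^ n ∣ expF K D f := by
  rw [X_pow_dvd_iff]
  intro j hj
  rw [coeff_expF]
  refine Finset.sum_eq_zero fun m _ => ?_
  have hd := FD.iter_dvd hD m n h
  rw [X_pow_dvd_iff.mp hd j (by omega), smul_zero]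

end ExpL

/-- The Poisson commutant of `φ₀(A)` in `(B,σ₀)`, as a subalgebra of `B`. -/
def commutant (K : Type*) {A B : Type*} [Field K] [CommRing A] [CommRing B] [Algebra K B]
    (σ₀ : B → B → B) (φ₀ : A →+* B) (hσ₀ : IsPoissonBr σ₀)
    (hsm : ∀ (c : K) (x y : B), σ₀ (c • x) y = c • σ₀ x y) : Subalgebra K B where
  carrier := {b : B | ∀ a : A, σ₀ b (φ₀ a) = 0}
  one_mem' := by
    simp only [Set.mem_setOf_eq]
    intro a
    have h1 : σ₀ (φ₀ a) (1 : B) = 0 := by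
      have h := hσ₀.leibniz (φ₀ a) 1 1
      rw [mul_one, mul_one, one_mul] at h
      exact (left_eq_add.mp h)
    rw [hσ₀.antisymm, h1, neg_zero]
  zero_mem' := by
    simp only [Set.mem_setOf_eq]
    intro a
    have h := hσ₀.add_left 0 0 (φ₀ a)
    rw [add_zero] at h
    exact (left_eq_add.mp h)
  add_mem' := by
    intro x y hx hy
    simp only [Set.mem_setOf_eq] at hx hy ⊢
    intro a
    rw [hσ₀.add_left, hx a, hy a, add_zero]
  mul_mem' := by
    intro x y hx hy
    simp only [Set.mem_setOf_eq] at hx hy ⊢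
    intro a
    have hx' : σ₀ (φ₀ a) x = 0 := by rw [hσ₀.antisymm, hx a, neg_zero]
    have hy' : σ₀ (φ₀ a) y = 0 := by rw [hσ₀.antisymm, hy a, neg_zero]
    rw [hσ₀.antisymm, hσ₀.leibniz, hx', hy']
    simp
  algebraMap_mem' := by
    intro c
    simp only [Set.mem_setOf_eq]
    intro a
    have h1 : σ₀ (φ₀ a) (1 : B) = 0 := by
      have h := hσ₀.leibniz (φ₀ a) 1 1
      rw [mul_one, mul_one, one_mul] at h
      exact (left_eq_add.mp h)
    have h2 : σ₀ (1 : B) (φ₀ a) = 0 := by rw [hσ₀.antisymm, h1, neg_zero]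
    rw [Algebra.algebraMap_eq_smul_one, hsm, h2, smul_zero]

/-- The deformed morphism `exp(X') ∘ φ₀' : A'[[λ]] → B[[λ]]` on the commutant. -/
noncomputable def thetaMap (K : Type*) {A B : Type*} [Field K] [CommRing A] [CommRing B]
    [Algebra K B] (σ₀ : B → B → B) (φ₀ : A →+* B) (hσ₀ : IsPoissonBr σ₀)
    (hsm : ∀ (c : K) (x y : B), σ₀ (c • x) y = c • σ₀ x y)
    (X' : PowerSeries B → PowerSeries B) :
    PowerSeries ↥(commutant K σ₀ φ₀ hσ₀ hsm) → PowerSeries B :=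
  fun g => expF K X'
    (PowerSeries.map ((commutant K σ₀ φ₀ hσ₀ hsm).val.toRingHom) g)

/-!
Statement 11: let `Φ : (A[[λ]],π) → (B[[λ]],σ)` be a Poisson morphism deforming the
injective Poisson morphism `φ₀ : (A,π₀) → (B,σ₀)`, `A'` the Poisson commutant of `φ₀(A)`
in `(B,σ₀)` with inclusion `φ₀'`, and
`C = {b ∈ B[[λ]] | σ(b, Φ(a)) = 0 ∀ a ∈ A[[λ]]}`.  If `X' ∈ λ·Der(B)[[λ]]` satisfies
`exp(X') φ₀'(A'[[λ]]) ⊆ C`, then `exp(X') ∘ φ₀' : A'[[λ]] → C` is a ring isomorphism.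
-/
theorem stmt_11 {K A B : Type*} [Field K] [CharZero K] [CommRing A] [CommRing B]
    [Algebra K B]
    (π₀ : A → A → A) (σ₀ : B → B → B)
    (hπ₀ : IsPoissonBr π₀) (hσ₀ : IsPoissonBr σ₀)
    (hsm : ∀ (c : K) (x y : B), σ₀ (c • x) y = c • σ₀ x y)
    (φ₀ : A →+* B) (hφinj : Function.Injective φ₀)
    (hφ₀ : ∀ x y, φ₀ (π₀ x y) = σ₀ (φ₀ x) (φ₀ y))
    -- formal Poisson deformations of π₀ and σ₀
    (π : PowerSeries A → PowerSeries A → PowerSeries A)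
    (σ : PowerSeries B → PowerSeries B → PowerSeries B)
    (hπ : IsPoissonBr π) (hσ : IsPoissonBr σ)
    (hπX : ∀ f g, π (PowerSeries.X * f) g = PowerSeries.X * π f g)
    (hσX : ∀ f g, σ (PowerSeries.X * f) g = PowerSeries.X * σ f g)
    (hπ0 : ∀ a b : A, PowerSeries.coeff (R := A) 0 (π (PowerSeries.C (R := A) a) (PowerSeries.C (R := A) b))
       = π₀ a b)
    (hσ0 : ∀ a b : B, PowerSeries.coeff (R := B) 0 (σ (PowerSeries.C (R := B) a) (PowerSeries.C (R := B) b))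
       = σ₀ a b)
    -- the deformed Poisson morphism Φ, deforming φ₀
    (Φ : PowerSeries A →+* PowerSeries B)
    (hΦ0 : ∀ f, PowerSeries.coeff (R := B) 0 (Φ f) = φ₀ (PowerSeries.coeff (R := A) 0 f))
    (hΦX : ∀ f, Φ (PowerSeries.X * f) = PowerSeries.X * Φ f)
    (hΦP : ∀ f g, Φ (π f g) = σ (Φ f) (Φ g))
    -- X' ∈ λ·Der(B)[[λ]] with exp(X') φ₀'(A'[[λ]]) ⊆ C
    (X' : PowerSeries B → PowerSeries B) (hX' : IsFormalDer K X')
    (hinto : ∀ g : PowerSeries ↥(commutant K σ₀ φ₀ hσ₀ hsm),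
      ∀ f : PowerSeries A, σ (thetaMap K σ₀ φ₀ hσ₀ hsm X' g) (Φ f) = 0) :
    Function.Injective (thetaMap K σ₀ φ₀ hσ₀ hsm X') ∧
    Set.range (thetaMap K σ₀ φ₀ hσ₀ hsm X') =
      {h : PowerSeries B | ∀ f : PowerSeries A, σ h (Φ f) = 0} ∧
    thetaMap K σ₀ φ₀ hσ₀ hsm X' 1 = 1 ∧
    (∀ g₁ g₂, thetaMap K σ₀ φ₀ hσ₀ hsm X' (g₁ + g₂) =
      thetaMap K σ₀ φ₀ hσ₀ hsm X' g₁ + thetaMap K σ₀ φ₀ hσ₀ hsm X' g₂) ∧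
    (∀ g₁ g₂, thetaMap K σ₀ φ₀ hσ₀ hsm X' (g₁ * g₂) =
      thetaMap K σ₀ φ₀ hσ₀ hsm X' g₁ * thetaMap K σ₀ φ₀ hσ₀ hsm X' g₂) := by
  classical
  set ι := ((commutant K σ₀ φ₀ hσ₀ hsm).val.toRingHom) with hιdef
  set θ := thetaMap K σ₀ φ₀ hσ₀ hsm X' with hθdef
  have θeq : ∀ g, θ g = expF K X' (PowerSeries.map ι g) := fun _ => rfl
  have hιinj : Function.Injective ι := Subtype.val_injective
  have hmapinj : Function.Injective (PowerSeries.map ι) := by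
    intro u v huv
    ext n
    have := congrArg (PowerSeries.coeff (R := B) n) huv
    rw [PowerSeries.coeff_map, PowerSeries.coeff_map] at this
    exact this
  have θinj : Function.Injective θ := fun u v huv => hmapinj (expF_injective hX' huv)
  have θone : θ 1 = 1 := by rw [θeq, map_one, expF_one hX']
  have θadd : ∀ u v, θ (u + v) = θ u + θ v := fun u v => by
    rw [θeq, θeq, θeq, map_add, expF_add hX']
  have θmul : ∀ u v, θ (u * v) = θ u * θ v := fun u v => by
    rw [θeq, θeq, θeq, map_mul, expF_mul hX']
  have θzero : θ 0 = 0 := by rw [θeq, map_zero, expF_zero hX']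
  have θXpow : ∀ (n : ℕ) u, θ (PowerSeries.X ^ n * u) = PowerSeries.X ^ n * θ u := by
    intro n u
    rw [θeq, θeq, map_mul, map_pow, PowerSeries.map_X, expF_X_pow_mul hX']
  have θC0 : ∀ b : ↥(commutant K σ₀ φ₀ hσ₀ hsm),
      PowerSeries.coeff (R := B) 0 (θ (PowerSeries.C b)) = (b : B) := by
    intro b
    rw [θeq, coeff_zero_expF hX', PowerSeries.coeff_map, PowerSeries.coeff_zero_C]
    rfl
  -- σ helpers
  have σ0l : ∀ v, σ 0 v = 0 := by
    intro v
    have h := hσ.add_left 0 0 v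
    rw [add_zero] at h
    exact (left_eq_add.mp h)
  have σnl : ∀ u v, σ (-u) v = -σ u v := by
    intro u v
    have h := hσ.add_left u (-u) v
    rw [add_neg_cancel, σ0l] at h
    exact eq_neg_of_add_eq_zero_right h.symm
  have σsub : ∀ u w v, σ (u - w) v = σ u v - σ w v := by
    intro u w v
    rw [sub_eq_add_neg, hσ.add_left, σnl, sub_eq_add_neg]
  have σXr : ∀ u v, σ u (PowerSeries.X * v) = PowerSeries.X * σ u v := by
    intro u v
    rw [hσ.antisymm, hσX, hσ.antisymm v u]
    ring
  have Xcan : ∀ u : PowerSeries B, PowerSeries.X * u = 0 → u = 0 := by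
    intro u hu
    ext n
    have := congrArg (PowerSeries.coeff (R := B) (n + 1)) hu
    rw [PowerSeries.coeff_succ_X_mul] at this
    simpa using this
  have c0X : ∀ v : PowerSeries B, PowerSeries.coeff (R := B) 0 (PowerSeries.X * v) = 0 := by
    intro v
    simp [PowerSeries.coeff_zero_eq_constantCoeff]
  have shift : ∀ u : PowerSeries B, PowerSeries.coeff (R := B) 0 u = 0 →
      ∃ v, u = PowerSeries.X * v := by
    intro u hu
    refine ⟨PowerSeries.mk fun n => PowerSeries.coeff (R := B) (n + 1) u, ?_⟩
    ext n
    cases n with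
    | zero => rw [hu, c0X]
    | succ n => rw [PowerSeries.coeff_succ_X_mul, PowerSeries.coeff_mk]
  have hdec : ∀ u : PowerSeries B,
      ∃ v, u = PowerSeries.C (R := B) (PowerSeries.coeff (R := B) 0 u) + PowerSeries.X * v := by
    intro u
    obtain ⟨v, hv⟩ := shift (u - PowerSeries.C (R := B) (PowerSeries.coeff (R := B) 0 u))
      (by rw [map_sub, PowerSeries.coeff_zero_C, sub_self])
    exact ⟨v, by rw [← hv]; ring⟩
  -- zeroth coefficient of an element of the commutant C lies in A'
  have memA' : ∀ u : PowerSeries B, (∀ f, σ u (Φ f) = 0) →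
      PowerSeries.coeff (R := B) 0 u ∈ commutant K σ₀ φ₀ hσ₀ hsm := by
    intro u hu
    show ∀ a : A, σ₀ (PowerSeries.coeff (R := B) 0 u) (φ₀ a) = 0
    intro a
    obtain ⟨t, ht⟩ := hdec u
    obtain ⟨s, hs⟩ := hdec (Φ (PowerSeries.C (R := A) a))
    rw [hΦ0, PowerSeries.coeff_zero_C] at hs
    have h0 := hu (PowerSeries.C (R := A) a)
    rw [ht, hs, hσ.add_left, hσ.add_right, hσ.add_right] at h0
    have h1 := congrArg (PowerSeries.coeff (R := B) 0) h0
    rw [map_add, map_add, map_add, σXr, hσX, hσX, c0X, c0X, c0X, add_zero, add_zero,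
      add_zero, hσ0] at h1
    simpa using h1
  -- surjectivity onto the commutant C
  have hsurj : ∀ h : PowerSeries B, (∀ f, σ h (Φ f) = 0) → ∃ g, θ g = h := by
    intro h hh
    have ex : ∀ n : ℕ, ∃ g r, (∀ f, σ r (Φ f) = 0) ∧
        h - θ g = PowerSeries.X ^ n * r := by
      intro n
      induction n with
      | zero => exact ⟨0, h, hh, by rw [θzero, pow_zero, one_mul, sub_zero]⟩
      | succ n IH =>
        obtain ⟨g, r, hr, heq⟩ := IH
        set b : ↥(commutant K σ₀ φ₀ hσ₀ hsm) := ⟨PowerSeries.coeff (R := B) 0 r, memA' r hr⟩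
          with hbdef
        have hu : ∀ f, σ (r - θ (PowerSeries.C b)) (Φ f) = 0 := by
          intro f
          rw [σsub, hr, hinto, sub_zero]
        have h0 : PowerSeries.coeff (R := B) 0 (r - θ (PowerSeries.C b)) = 0 := by
          rw [map_sub, θC0]
          simp [hbdef]
        obtain ⟨r', hr'⟩ := shift _ h0
        have hr'C : ∀ f, σ r' (Φ f) = 0 := by
          intro f
          exact Xcan _ (by rw [← hσX, ← hr', hu f])
        refine ⟨g + PowerSeries.X ^ n * PowerSeries.C b, r', hr'C, ?_⟩
        rw [θadd, θXpow]
        calc h - (θ g + PowerSeries.X ^ n * θ (PowerSeries.C b))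
            = (h - θ g) - PowerSeries.X ^ n * θ (PowerSeries.C b) := by ring
          _ = PowerSeries.X ^ n * r - PowerSeries.X ^ n * θ (PowerSeries.C b) := by
              rw [heq]
          _ = PowerSeries.X ^ n * (r - θ (PowerSeries.C b)) := by ring
          _ = PowerSeries.X ^ n * (PowerSeries.X * r') := by rw [← hr']
          _ = PowerSeries.X ^ (n + 1) * r' := by ring
    choose gs rs hrs hXeq using ex
    have θordrev : ∀ (u v : PowerSeries ↥(commutant K σ₀ φ₀ hσ₀ hsm)) (n : ℕ),
        (PowerSeries.X : PowerSeries B) ^ n ∣ (θ u - θ v) →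
        ∀ j < n, PowerSeries.coeff j u = PowerSeries.coeff j v := by
      intro u v n hdvd j hj
      have he : θ u - θ v = expF K X' (PowerSeries.map ι (u - v)) := by
        rw [map_sub, expF_sub hX', θeq, θeq]
      rw [he] at hdvd
      have hz := expF_coeff_rev hX' (fun i hi => PowerSeries.X_pow_dvd_iff.mp hdvd i hi) j hj
      rw [PowerSeries.coeff_map, map_sub] at hz
      apply hιinj
      have : ι (PowerSeries.coeff j u) - ι (PowerSeries.coeff j v) = 0 := by
        rw [← map_sub]; exact hz
      rw [sub_eq_zero] at this
      exact this
    have θord : ∀ (u v : PowerSeries ↥(commutant K σ₀ φ₀ hσ₀ hsm)) (n : ℕ),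
        (∀ j < n, PowerSeries.coeff j u = PowerSeries.coeff j v) →
        (PowerSeries.X : PowerSeries B) ^ n ∣ (θ u - θ v) := by
      intro u v n hcoeff
      have he : θ u - θ v = expF K X' (PowerSeries.map ι (u - v)) := by
        rw [map_sub, expF_sub hX', θeq, θeq]
      rw [he]
      refine expF_dvd hX' (PowerSeries.X_pow_dvd_iff.mpr fun j hj => ?_)
      rw [PowerSeries.coeff_map, map_sub, hcoeff j hj, sub_self, map_zero]
    have stab : ∀ {n m : ℕ}, n ≤ m → ∀ j < n,
        PowerSeries.coeff j (gs n) = PowerSeries.coeff j (gs m) := by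
      intro n m hnm
      apply θordrev
      have hid : θ (gs n) - θ (gs m) = (h - θ (gs m)) - (h - θ (gs n)) := by ring
      rw [hid, hXeq, hXeq]
      exact dvd_sub (Dvd.dvd.mul_right (pow_dvd_pow _ hnm) _) (Dvd.dvd.mul_right dvd_rfl _)
    refine ⟨PowerSeries.mk fun j => PowerSeries.coeff j (gs (j + 1)), ?_⟩
    set g := PowerSeries.mk fun j => PowerSeries.coeff j (gs (j + 1)) with hgdef
    have hg : ∀ n, ∀ j < n, PowerSeries.coeff j g = PowerSeries.coeff j (gs n) := by
      intro n j hj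
      rw [hgdef, PowerSeries.coeff_mk]
      exact stab (by omega) j (by omega)
    ext k
    have d1 : (PowerSeries.X : PowerSeries B) ^ (k + 1) ∣ θ g - θ (gs (k + 1)) :=
      θord _ _ _ (fun j hj => hg (k + 1) j hj)
    have d2 : θ g - h = (θ g - θ (gs (k + 1))) - (h - θ (gs (k + 1))) := by ring
    have d3 : (PowerSeries.X : PowerSeries B) ^ (k + 1) ∣ θ g - h := by
      rw [d2, hXeq]
      exact dvd_sub d1 (Dvd.dvd.mul_right dvd_rfl _)
    have hz := PowerSeries.X_pow_dvd_iff.mp d3 k (Nat.lt_succ_self k)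
    rw [map_sub, sub_eq_zero] at hz
    exact hz
  refine ⟨θinj, ?_, θone, θadd, θmul⟩
  ext h
  constructor
  · rintro ⟨g, rfl⟩
    exact hinto g
  · intro hh
    exact hsurj h hh
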